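/- arXiv:1708.02656 — 4 statements merged into one kernel-verified Lean document; each statement's English description precedes it below -/
import Mathlib

section
/- Let k be an algebraically closed field, let G be a group, and let H be a normal subgroup of G. Let ρ : G → GL(V) and ρ′ : G → GL(V′) be representations of G on finite-dimensional k-vector spaces V and V′ of the same dimension n, and suppose det(ρ(g)) = det(ρ′(g)) for all g ∈ G. Suppose that the restrictions ρ|_H and ρ′|_H are irreducible and isomorphic as representations of H. Then there exists a subgroup G′ of G of finite index (in fact of index dividing n) such that ρ|_{G′} and ρ′|_{G′} are isomorphic as representations of G′. -/
-- Schur-type auxiliary lemma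
theorem schur_scalar
    {k : Type*} [Field k] [IsAlgClosed k]
    {G : Type*} [Group G] (H : Subgroup G)
    {V : Type*} [AddCommGroup V] [Module k V] [FiniteDimensional k V] [Nontrivial V]
    (ρ : Representation k G V)
    (hirr : ∀ W : Submodule k V, (∀ h ∈ H, ∀ v ∈ W, ρ h v ∈ W) → W = ⊥ ∨ W = ⊤)
    (B : Module.End k V) (hB : ∀ h ∈ H, ∀ v : V, B (ρ h v) = ρ h (B v)) :
    ∃ μ : k, B = μ • (1 : Module.End k V) := by
  obtain ⟨μ, hμ⟩ := Module.End.exists_eigenvalue B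
  refine ⟨μ, ?_⟩
  have hinv : ∀ h ∈ H, ∀ v ∈ B.eigenspace μ, ρ h v ∈ B.eigenspace μ := by
    intro h hh v hv
    rw [Module.End.mem_eigenspace_iff] at hv ⊢
    rw [hB h hh v, hv, map_smul]
  rcases hirr _ hinv with h0 | htop
  · exact absurd h0 hμ
  · ext v
    have : v ∈ B.eigenspace μ := htop ▸ Submodule.mem_top
    rw [Module.End.mem_eigenspace_iff] at this
    simpa using this

/-- **Lemma 2.6 (Lemma `lemma:rep`).**
Let `k` be an algebraically closed field, `G` a group, `H` a normal subgroup of `G`.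
Let `ρ : G → GL(V)` and `ρ' : G → GL(V')` be representations on finite-dimensional
`k`-vector spaces of the same dimension `n` with equal determinants.  If the
restrictions `ρ|_H` and `ρ'|_H` are irreducible and isomorphic as representations
of `H`, then there is a subgroup `G'` of `G` of finite index (in fact of index
dividing `n`) such that `ρ|_{G'}` and `ρ'|_{G'}` are isomorphic. -/
theorem rank_two_twist_descent
    {k : Type*} [Field k] [IsAlgClosed k]
    {G : Type*} [Group G] (H : Subgroup G) [H.Normal]
    {V V' : Type*} [AddCommGroup V] [Module k V] [AddCommGroup V'] [Module k V']
    [FiniteDimensional k V] [FiniteDimensional k V']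
    (n : ℕ)
    (hdimV : Module.finrank k V = n) (hdimV' : Module.finrank k V' = n)
    (ρ : Representation k G V) (ρ' : Representation k G V')
    (hdet : ∀ g : G, LinearMap.det (ρ g) = LinearMap.det (ρ' g))
    (hirrH : Nontrivial V ∧
      ∀ W : Submodule k V, (∀ h ∈ H, ∀ v ∈ W, ρ h v ∈ W) → W = ⊥ ∨ W = ⊤)
    (hirrH' : Nontrivial V' ∧
      ∀ W : Submodule k V', (∀ h ∈ H, ∀ v ∈ W, ρ' h v ∈ W) → W = ⊥ ∨ W = ⊤)
    (hisoH : ∃ f : V ≃ₗ[k] V', ∀ h ∈ H, ∀ v : V, f (ρ h v) = ρ' h (f v)) :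
    ∃ G' : Subgroup G, G'.index ≠ 0 ∧ G'.index ∣ n ∧
      ∃ f : V ≃ₗ[k] V', ∀ g ∈ G', ∀ v : V, f (ρ g v) = ρ' g (f v) := by
  obtain ⟨hVnt, hirr⟩ := hirrH
  obtain ⟨f, hf⟩ := hisoH
  have hn : 0 < n := hdimV ▸ Module.finrank_pos
  have hf' : ∀ h ∈ H, ∀ u : V', f.symm (ρ' h u) = ρ h (f.symm u) := by
    intro h hh u
    apply f.injective
    rw [f.apply_symm_apply, hf h hh, f.apply_symm_apply]
  obtain ⟨v₀, hv₀⟩ := exists_ne (0 : V)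
  have scal_ext : ∀ a b : k, a • v₀ = b • v₀ → a = b := by
    intro a b hab
    have h1 : (a - b) • v₀ = 0 := by rw [sub_smul, hab, sub_self]
    rcases smul_eq_zero.mp h1 with h | h
    · exact sub_eq_zero.mp h
    · exact absurd h hv₀
  -- the twisting endomorphism
  let A : G → Module.End k V := fun g =>
    (f.symm.toLinearMap ∘ₗ (ρ' g : V' →ₗ[k] V') ∘ₗ f.toLinearMap) ∘ₗ (ρ g⁻¹ : V →ₗ[k] V)
  have hAapply : ∀ g v, A g v = f.symm (ρ' g (f (ρ g⁻¹ v))) := fun g v => rfl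
  -- A g commutes with ρ h for h ∈ H
  have hcomm : ∀ g : G, ∀ h ∈ H, ∀ v : V, A g (ρ h v) = ρ h (A g v) := by
    intro g h hh v
    have hmem : g⁻¹ * h * g ∈ H := by
      simpa using Subgroup.Normal.conj_mem ‹H.Normal› h hh g⁻¹
    have e1 : ρ g⁻¹ (ρ h v) = ρ (g⁻¹ * h * g) (ρ g⁻¹ v) := by
      rw [← Module.End.mul_apply, ← Module.End.mul_apply, ← map_mul, ← map_mul]
      congr 2
      group
    rw [hAapply, hAapply, e1, hf _ hmem]
    have e2 : ρ' g (ρ' (g⁻¹ * h * g) (f (ρ g⁻¹ v))) = ρ' h (ρ' g (f (ρ g⁻¹ v))) := by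
      rw [← Module.End.mul_apply, ← Module.End.mul_apply, ← map_mul, ← map_mul]
      congr 2
      group
    rw [e2, hf' h hh]
  -- each A g is scalar
  have hsc : ∀ g : G, ∃ μ : k, A g = μ • (1 : Module.End k V) :=
    fun g => schur_scalar H ρ hirr (A g) (hcomm g)
  let μ : G → k := fun g => (hsc g).choose
  have hμ : ∀ g : G, A g = μ g • (1 : Module.End k V) := fun g => (hsc g).choose_spec
  have hμapply : ∀ g v, A g v = μ g • v := by
    intro g v
    rw [hμ g]
    simp
  -- determinant of A g is 1
  have hdetA : ∀ g : G, LinearMap.det (A g) = 1 := by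
    intro g
    have h1 : LinearMap.det
        ((f.symm.toLinearMap ∘ₗ (ρ' g : V' →ₗ[k] V') ∘ₗ f.toLinearMap)) =
        LinearMap.det (ρ' g : V' →ₗ[k] V') := by
      simpa using LinearMap.det_conj (ρ' g : V' →ₗ[k] V') f.symm
    have h2 : LinearMap.det (A g) =
        LinearMap.det (ρ' g : V' →ₗ[k] V') * LinearMap.det (ρ g⁻¹ : V →ₗ[k] V) := by
      rw [show A g = (f.symm.toLinearMap ∘ₗ (ρ' g : V' →ₗ[k] V') ∘ₗ f.toLinearMap) ∘ₗ
        (ρ g⁻¹ : V →ₗ[k] V) from rfl, LinearMap.det_comp, h1]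
    rw [h2, ← hdet g, ← LinearMap.det_comp, ← Module.End.mul_eq_comp, ← map_mul, mul_inv_cancel]
    simp
  -- μ g ^ n = 1
  have hpow : ∀ g : G, μ g ^ n = 1 := by
    intro g
    have h0 := hdetA g
    rw [hμ g, LinearMap.det_smul, hdimV] at h0
    simpa using h0
  have hn' : n ≠ 0 := hn.ne'
  have hu : ∀ g : G, IsUnit (μ g) :=
    fun g => (isUnit_pow_iff hn').mp ((hpow g) ▸ isUnit_one)
  -- μ is multiplicative
  have hμone : μ 1 = 1 := by
    apply scal_ext
    rw [← hμapply 1 v₀, hAapply]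
    simp
  have hμmul : ∀ g g' : G, μ (g * g') = μ g * μ g' := by
    intro g g'
    apply scal_ext
    rw [← hμapply (g * g') v₀, hAapply]
    have e1 : ρ (g * g')⁻¹ v₀ = ρ g'⁻¹ (ρ g⁻¹ v₀) := by
      rw [← Module.End.mul_apply, ← map_mul, mul_inv_rev]
    have e2 : ρ' g' (f (ρ g'⁻¹ (ρ g⁻¹ v₀))) = μ g' • f (ρ g⁻¹ v₀) := by
      have := hμapply g' (ρ g⁻¹ v₀)
      rw [hAapply] at this
      calc ρ' g' (f (ρ g'⁻¹ (ρ g⁻¹ v₀)))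
          = f (f.symm (ρ' g' (f (ρ g'⁻¹ (ρ g⁻¹ v₀))))) := by rw [f.apply_symm_apply]
        _ = f (μ g' • ρ g⁻¹ v₀) := by rw [this]
        _ = μ g' • f (ρ g⁻¹ v₀) := by rw [map_smul]
    have e3 : ρ' (g * g') (f (ρ (g * g')⁻¹ v₀)) = ρ' g (ρ' g' (f (ρ g'⁻¹ (ρ g⁻¹ v₀)))) := by
      rw [e1]
      conv_lhs => rw [show (g * g' : G) = g * g' from rfl, map_mul, Module.End.mul_apply]
    rw [e3, e2, map_smul, map_smul]
    have e4 : f.symm (ρ' g (f (ρ g⁻¹ v₀))) = μ g • v₀ := by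
      rw [← hAapply, hμapply]
    rw [e4, smul_smul, mul_comm (μ g') (μ g)]
  -- the character φ : G →* kˣ
  let φ : G →* kˣ :=
    { toFun := fun g => (hu g).unit
      map_one' := by
        ext
        rw [IsUnit.unit_spec, hμone, Units.val_one]
      map_mul' := by
        intro g g'
        ext
        rw [IsUnit.unit_spec, Units.val_mul, IsUnit.unit_spec, IsUnit.unit_spec, hμmul] }
  have hφval : ∀ g : G, (φ g : k) = μ g := fun g => IsUnit.unit_spec (hu g)
  haveI : NeZero n := ⟨hn'⟩
  have hle : φ.range ≤ rootsOfUnity n k := by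
    rintro x ⟨g, rfl⟩
    rw [mem_rootsOfUnity]
    ext
    rw [Units.val_pow_eq_pow_val, hφval, hpow, Units.val_one]
  haveI hfin : Finite φ.range :=
    Finite.of_injective (Subgroup.inclusion hle) (Subgroup.inclusion_injective hle)
  have hcard : Nat.card φ.range ∣ n := by
    obtain ⟨x, hx⟩ := IsCyclic.exists_generator (α := φ.range)
    rw [← orderOf_eq_card_of_forall_mem_zpowers hx]
    apply orderOf_dvd_of_pow_eq_one
    have hxmem : (x : kˣ) ∈ φ.range := x.2
    obtain ⟨g, hg⟩ := hxmem
    have : ((x : kˣ)) ^ n = 1 := by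
      rw [← hg]
      ext
      rw [Units.val_pow_eq_pow_val, hφval, hpow, Units.val_one]
    ext
    rw [Subgroup.coe_pow, this, OneMemClass.coe_one]
  refine ⟨φ.ker, ?_, ?_, f, ?_⟩
  · rw [Subgroup.index_ker]
    exact Nat.card_pos.ne'
  · rw [Subgroup.index_ker]
    exact hcard
  · intro g hg v
    have hμg : μ g = 1 := by
      rw [← hφval]
      rw [MonoidHom.mem_ker] at hg
      rw [hg, Units.val_one]
    have := hμapply g (ρ g v)
    rw [hAapply, hμg, one_smul] at this
    have e5 : ρ g⁻¹ (ρ g v) = v := by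
      rw [← Module.End.mul_apply, ← map_mul, inv_mul_cancel, map_one, Module.End.one_apply]
    rw [e5] at this
    rw [← this, f.apply_symm_apply]
end

section
/- Let k be an algebraically closed field, let G be a group, and let H be a normal subgroup of G. Let ρ : G → GL(V) and ρ′ : G → GL(V′) be representations of G on finite-dimensional k-vector spaces of the same dimension n, and suppose that the restrictions ρ|_H and ρ′|_H are irreducible and isomorphic as representations of H. Then there exists a group homomorphism χ : G → kˣ that is trivial on H such that ρ′ is isomorphic, as a representation of G, to the twist χ ⊗ ρ (the representation g ↦ χ(g)·ρ(g)). Moreover, if additionally det(ρ(g)) = det(ρ′(g)) for all g ∈ G, then χ(g)ⁿ = 1 for all g ∈ G. -/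
/-- Let `k` be an algebraically closed field, `G` a group, `H` a normal subgroup of `G`.
Let `ρ : G → GL(V)` and `ρ' : G → GL(V')` be representations on finite-dimensional
`k`-vector spaces of the same dimension `n` whose restrictions to `H` are irreducible
and isomorphic.  Then there is a character `χ : G → kˣ`, trivial on `H`, such that
`ρ'` is isomorphic to the twist `χ ⊗ ρ` as a representation of `G`.  Moreover, if the
determinants of `ρ` and `ρ'` agree, then `χ(g)ⁿ = 1` for all `g`. -/
theorem twist_of_restriction_isomorphic
    {k : Type*} [Field k] [IsAlgClosed k]
    {G : Type*} [Group G] (H : Subgroup G) [H.Normal]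
    {V V' : Type*} [AddCommGroup V] [Module k V] [AddCommGroup V'] [Module k V']
    [FiniteDimensional k V] [FiniteDimensional k V']
    (n : ℕ)
    (hdimV : Module.finrank k V = n) (hdimV' : Module.finrank k V' = n)
    (ρ : Representation k G V) (ρ' : Representation k G V')
    (hirrH : Nontrivial V ∧
      ∀ W : Submodule k V, (∀ h ∈ H, ∀ v ∈ W, ρ h v ∈ W) → W = ⊥ ∨ W = ⊤)
    (hirrH' : Nontrivial V' ∧
      ∀ W : Submodule k V', (∀ h ∈ H, ∀ v ∈ W, ρ' h v ∈ W) → W = ⊥ ∨ W = ⊤)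
    (hisoH : ∃ f : V ≃ₗ[k] V', ∀ h ∈ H, ∀ v : V, f (ρ h v) = ρ' h (f v)) :
    ∃ χ : G →* kˣ, (∀ h ∈ H, χ h = 1) ∧
      (∃ f : V ≃ₗ[k] V', ∀ g : G, ∀ v : V, f ((χ g : k) • ρ g v) = ρ' g (f v)) ∧
      ((∀ g : G, LinearMap.det (ρ g) = LinearMap.det (ρ' g)) →
        ∀ g : G, (χ g) ^ n = 1) := by
  classical
  obtain ⟨hV, hirr⟩ := hirrH
  obtain ⟨f, hf⟩ := hisoH
  -- ρ g is injective
  have hρinj : ∀ g : G, Function.Injective (ρ g) := by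
    intro g
    have : Function.LeftInverse (ρ g⁻¹) (ρ g) := by
      intro v
      rw [← Module.End.mul_apply, ← map_mul, inv_mul_cancel, map_one, Module.End.one_apply]
    exact this.injective
  have hρ'li : ∀ g : G, Function.LeftInverse (ρ' g⁻¹) (ρ' g) := by
    intro g v
    rw [← Module.End.mul_apply, ← map_mul, inv_mul_cancel, map_one, Module.End.one_apply]
  -- Schur's lemma: an endomorphism commuting with the H-action is a scalar
  have schur : ∀ T : V →ₗ[k] V, (∀ h ∈ H, ∀ v, T (ρ h v) = ρ h (T v)) →
      ∃ c : k, ∀ v, T v = c • v := by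
    intro T hT
    obtain ⟨c, hc⟩ := Module.End.exists_eigenvalue (T : Module.End k V)
    refine ⟨c, ?_⟩
    have hinv : ∀ h ∈ H, ∀ v ∈ Module.End.eigenspace T c, ρ h v ∈ Module.End.eigenspace T c := by
      intro h hh v hv
      rw [Module.End.mem_eigenspace_iff] at hv ⊢
      rw [hT h hh, hv, map_smul]
    rcases hirr _ hinv with hbot | htop
    · exact absurd hbot hc
    · intro v
      have : v ∈ Module.End.eigenspace T c := htop ▸ Submodule.mem_top
      exact Module.End.mem_eigenspace_iff.mp this
  -- existence of the scalar for each g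
  have exists_c : ∀ g : G, ∃ u : kˣ, ∀ v : V, f ((u : k) • ρ g v) = ρ' g (f v) := by
    intro g
    set T : V →ₗ[k] V :=
      f.symm.toLinearMap ∘ₗ (ρ' g) ∘ₗ f.toLinearMap ∘ₗ (ρ g⁻¹) with hTdef
    have hTapp : ∀ v, T v = f.symm (ρ' g (f (ρ g⁻¹ v))) := fun v => rfl
    have hcomm : ∀ h ∈ H, ∀ v, T (ρ h v) = ρ h (T v) := by
      intro h hh v
      have hmem : g⁻¹ * h * g ∈ H := Subgroup.Normal.conj_mem' ‹H.Normal› h hh g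
      have step1 : ρ g⁻¹ (ρ h v) = ρ (g⁻¹ * h * g) (ρ g⁻¹ v) := by
        rw [← Module.End.mul_apply, ← Module.End.mul_apply, ← map_mul, ← map_mul]
        congr 1
        group
      have step2 : f (ρ (g⁻¹ * h * g) (ρ g⁻¹ v)) = ρ' (g⁻¹ * h * g) (f (ρ g⁻¹ v)) :=
        hf _ hmem _
      have step3 : ρ' g (ρ' (g⁻¹ * h * g) (f (ρ g⁻¹ v))) = ρ' h (ρ' g (f (ρ g⁻¹ v))) := by
        rw [← Module.End.mul_apply, ← Module.End.mul_apply, ← map_mul, ← map_mul]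
        congr 1
        group
      have step4 : ∀ w : V', f.symm (ρ' h w) = ρ h (f.symm w) := by
        intro w
        apply f.injective
        rw [hf h hh, f.apply_symm_apply, f.apply_symm_apply]
      rw [hTapp, hTapp, step1, step2, step3, step4]
    obtain ⟨c, hc⟩ := schur T hcomm
    -- rewrite: ρ' g (f v) = f (c • ρ g v)
    have key : ∀ v : V, f (c • ρ g v) = ρ' g (f v) := by
      intro v
      have := hc (ρ g v)
      rw [hTapp] at this
      have hv : ρ g⁻¹ (ρ g v) = v := by
        rw [← Module.End.mul_apply, ← map_mul, inv_mul_cancel, map_one, Module.End.one_apply]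
      rw [hv] at this
      rw [← this, f.apply_symm_apply]
    have hc0 : c ≠ 0 := by
      intro h0
      obtain ⟨v, hv⟩ := exists_ne (0 : V)
      have hkv := (key v).symm
      rw [h0, zero_smul, map_zero] at hkv
      have h2 : f v = 0 := by
        have h3 := congrArg (ρ' g⁻¹) hkv
        rw [map_zero] at h3
        rw [← hρ'li g (f v), h3]
      exact hv (f.injective (by rw [h2, map_zero]))
    exact ⟨Units.mk0 c hc0, key⟩
  -- uniqueness of the scalar
  have uniq : ∀ g : G, ∀ a b : kˣ, (∀ v : V, f ((a : k) • ρ g v) = ρ' g (f v)) →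
      (∀ v : V, f ((b : k) • ρ g v) = ρ' g (f v)) → a = b := by
    intro g a b ha hb
    obtain ⟨v, hv⟩ := exists_ne (0 : V)
    have hw : ρ g v ≠ 0 := by
      intro h0
      exact hv (hρinj g (by rw [h0, map_zero]))
    have h2 : (a : k) • ρ g v = (b : k) • ρ g v :=
      f.injective (by rw [ha v, hb v])
    exact Units.ext (smul_left_injective k hw h2)
  set c : G → kˣ := fun g => (exists_c g).choose with hcdef
  have cspec : ∀ g : G, ∀ v : V, f ((c g : k) • ρ g v) = ρ' g (f v) :=
    fun g => (exists_c g).choose_spec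
  have hone : c 1 = 1 := by
    refine uniq 1 _ _ (cspec 1) ?_
    intro v
    simp
  have hmul : ∀ g₁ g₂ : G, c (g₁ * g₂) = c g₁ * c g₂ := by
    intro g₁ g₂
    refine uniq (g₁ * g₂) _ _ (cspec _) ?_
    intro v
    have : ((c g₁ * c g₂ : kˣ) : k) • ρ (g₁ * g₂) v
        = (c g₁ : k) • ρ g₁ ((c g₂ : k) • ρ g₂ v) := by
      rw [map_mul, Module.End.mul_apply, map_smul, Units.val_mul, mul_smul]
    rw [this, cspec g₁, cspec g₂, ← Module.End.mul_apply, ← map_mul]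
  refine ⟨{ toFun := c, map_one' := hone, map_mul' := hmul }, ?_, ⟨f, fun g v => cspec g v⟩, ?_⟩
  · intro h hh
    show c h = 1
    refine uniq h _ _ (cspec h) ?_
    intro v
    rw [Units.val_one, one_smul, hf h hh]
  · intro hdet g
    show (c g) ^ n = 1
    -- ρ' g = (c g) • (f ∘ ρ g ∘ f.symm)
    have hrep : (ρ' g) = (c g : k) • (f.toLinearMap ∘ₗ (ρ g) ∘ₗ f.symm.toLinearMap) := by
      ext w
      have := cspec g (f.symm w)
      rw [f.apply_symm_apply] at this
      rw [← this, map_smul]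
      rfl
    have hdet1 : LinearMap.det (ρ' g)
        = (c g : k) ^ n * LinearMap.det (ρ g) := by
      rw [hrep, LinearMap.det_smul, hdimV', LinearMap.det_conj]
    have hdetne : LinearMap.det (ρ g) ≠ 0 := by
      have h1 : LinearMap.det (ρ g) * LinearMap.det (ρ g⁻¹) = 1 := by
        rw [← LinearMap.det_comp, ← Module.End.mul_eq_comp, ← map_mul, mul_inv_cancel, map_one,
          map_one]
      exact left_ne_zero_of_mul_eq_one h1
    have : (c g : k) ^ n = 1 := by
      have := hdet g
      rw [hdet1] at this
      field_simp at this
      linear_combination -this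
    exact Units.ext (by rw [Units.val_pow_eq_pow_val, this, Units.val_one])
end

section
/- Let K be an algebraically closed field (for instance the algebraic closure of the ℓ-adic numbers ℚ_ℓ). Let G be a group, H a normal subgroup of G, and ρ : G → GL₂(K) a representation on the two-dimensional space V = K² that is irreducible (the only G-invariant subspaces of V are 0 and V). Assume there exists an element h ∈ H such that ρ(h) is a non-trivial unipotent element, i.e. ρ(h) ≠ 1 and (ρ(h) − 1)² = 0. Then the restriction ρ|_H is irreducible, i.e. the only H-invariant subspaces of V are 0 and V. -/
/-- **Lemma 2.7 (`stupid1`).**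
Let `K` be an algebraically closed field, `G` a group, `H` a normal subgroup of `G`,
and `ρ : G → GL₂(K)` an irreducible two-dimensional representation (acting on
`V = K²` by matrix multiplication).  If for some `h ∈ H` the matrix `ρ(h)` is a
non-trivial unipotent element, then the restriction `ρ|_H` is irreducible. -/
theorem restriction_irreducible_of_unipotent
    {K : Type*} [Field K] [IsAlgClosed K]
    {G : Type*} [Group G] (H : Subgroup G) [H.Normal]
    (ρ : G →* Matrix.GeneralLinearGroup (Fin 2) K)
    (hirr : ∀ W : Submodule K (Fin 2 → K),
      (∀ g : G, ∀ v ∈ W, (ρ g : Matrix (Fin 2) (Fin 2) K).mulVec v ∈ W) → W = ⊥ ∨ W = ⊤)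
    (h : G) (hh : h ∈ H)
    (hne : ρ h ≠ 1)
    (hunip : ((ρ h : Matrix (Fin 2) (Fin 2) K) - 1) ^ 2 = 0) :
    ∀ W : Submodule K (Fin 2 → K),
      (∀ g ∈ H, ∀ v ∈ W, (ρ g : Matrix (Fin 2) (Fin 2) K).mulVec v ∈ W) →
        W = ⊥ ∨ W = ⊤ := by
  intro W hW
  by_cases hbot : W = ⊥
  · exact Or.inl hbot
  by_cases htop : W = ⊤
  · exact Or.inr htop
  exfalso
  -- the unipotent matrix minus one
  set N : Matrix (Fin 2) (Fin 2) K := (ρ h : Matrix (Fin 2) (Fin 2) K) - 1 with hNdef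
  have hNne : N ≠ 0 := by
    intro h0
    exact hne (Units.ext (by rwa [hNdef, sub_eq_zero] at h0))
  set f : (Fin 2 → K) →ₗ[K] (Fin 2 → K) := N.mulVecLin with hfdef
  have hff : ∀ v, f (f v) = 0 := by
    intro v
    have h2 : (N * N).mulVec v = 0 := by
      rw [← pow_two, hunip, Matrix.zero_mulVec]
    simpa only [hfdef, Matrix.mulVecLin_apply, Matrix.mulVec_mulVec] using h2
  have hfne : f ≠ 0 := by
    intro h0
    apply hNne
    ext i j
    have := congrFun (congrArg (fun g => g (Pi.single j 1)) h0) i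
    simpa [hfdef, Matrix.mulVecLin_apply, Matrix.mulVec_single] using this
  have hfin : Module.finrank K (Fin 2 → K) = 2 := by simp
  -- the kernel of f is one-dimensional
  have hrange_le : LinearMap.range f ≤ LinearMap.ker f := by
    rintro x ⟨y, rfl⟩
    exact hff y
  have hker1 : Module.finrank K (LinearMap.ker f) = 1 := by
    have hsum := LinearMap.finrank_range_add_finrank_ker f
    rw [hfin] at hsum
    have hle : Module.finrank K (LinearMap.range f) ≤
        Module.finrank K (LinearMap.ker f) :=
      Submodule.finrank_mono hrange_le
    have hpos : LinearMap.range f ≠ ⊥ := by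
      rw [ne_eq, LinearMap.range_eq_bot]; exact hfne
    have hr0 : Module.finrank K (LinearMap.range f) ≠ 0 := by
      intro h0
      exact hpos (Submodule.finrank_eq_zero.mp h0)
    omega
  -- any nontrivial proper H-invariant subspace is the kernel of f
  have claim : ∀ W' : Submodule K (Fin 2 → K),
      (∀ g ∈ H, ∀ v ∈ W', (ρ g : Matrix (Fin 2) (Fin 2) K).mulVec v ∈ W') →
      W' ≠ ⊥ → W' ≠ ⊤ → W' = LinearMap.ker f := by
    intro W' hW' hb ht
    have hW'le : Module.finrank K W' ≤ 2 := le_trans (Submodule.finrank_le W') (le_of_eq hfin)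
    have hW'0 : Module.finrank K W' ≠ 0 := fun h0 => hb (Submodule.finrank_eq_zero.mp h0)
    have hW'2 : Module.finrank K W' ≠ 2 := by
      intro h2
      exact ht (Submodule.eq_top_of_finrank_eq (by rw [h2, hfin]))
    have hW'1 : Module.finrank K W' = 1 := by omega
    have hstab : ∀ v ∈ W', f v ∈ W' := by
      intro v hv
      have : f v = (ρ h : Matrix (Fin 2) (Fin 2) K).mulVec v - v := by
        simp [hfdef, hNdef, Matrix.mulVecLin_apply, Matrix.sub_mulVec]
      rw [this]
      exact Submodule.sub_mem W' (hW' h hh v hv) hv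
    by_cases hcase : ∀ v ∈ W', f v = 0
    · -- W' ≤ ker f
      have hle : W' ≤ LinearMap.ker f := fun v hv => hcase v hv
      exact Submodule.eq_of_le_of_finrank_eq hle (by rw [hW'1, hker1])
    · push_neg at hcase
      obtain ⟨v, hv, hfv⟩ := hcase
      have hu1 : f v ∈ W' := hstab v hv
      have hu2 : f v ∈ LinearMap.ker f := hff v
      have hspan : Module.finrank K (K ∙ (f v)) = 1 := finrank_span_singleton hfv
      have e1 : (K ∙ (f v)) = W' :=
        Submodule.eq_of_le_of_finrank_eq
          ((Submodule.span_singleton_le_iff_mem _ _).mpr hu1) (by rw [hspan, hW'1])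
      have e2 : (K ∙ (f v)) = LinearMap.ker f :=
        Submodule.eq_of_le_of_finrank_eq
          ((Submodule.span_singleton_le_iff_mem _ _).mpr hu2) (by rw [hspan, hker1])
      rw [← e1, e2]
  have hWker : W = LinearMap.ker f := claim W hW hbot htop
  -- now show W is G-invariant
  have hGinv : ∀ g : G, ∀ v ∈ W, (ρ g : Matrix (Fin 2) (Fin 2) K).mulVec v ∈ W := by
    intro g v hv
    -- the image of W under ρ(g)
    set e : (Fin 2 → K) ≃ₗ[K] (Fin 2 → K) :=
      LinearEquiv.ofLinear ((ρ g : Matrix (Fin 2) (Fin 2) K).mulVecLin)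
        (((ρ g)⁻¹ : Matrix.GeneralLinearGroup (Fin 2) K) : Matrix (Fin 2) (Fin 2) K).mulVecLin
        (by
          rw [← Matrix.mulVecLin_mul, ← Units.val_mul, mul_inv_cancel, Units.val_one,
            Matrix.mulVecLin_one])
        (by
          rw [← Matrix.mulVecLin_mul, ← Units.val_mul, inv_mul_cancel, Units.val_one,
            Matrix.mulVecLin_one]) with hedef
    set W' : Submodule K (Fin 2 → K) := W.map (e : (Fin 2 → K) →ₗ[K] (Fin 2 → K)) with hW'def
    have hrk : Module.finrank K W' = Module.finrank K W :=
      LinearEquiv.finrank_map_eq e W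
    have hb' : W' ≠ ⊥ := by
      intro h0
      apply hbot
      have : Module.finrank K W = 0 := by
        rw [← hrk, h0]; simp
      exact Submodule.finrank_eq_zero.mp this
    have ht' : W' ≠ ⊤ := by
      intro h0
      apply htop
      apply Submodule.eq_top_of_finrank_eq
      rw [← hrk, h0, finrank_top]
    have hinv' : ∀ k ∈ H, ∀ w ∈ W', (ρ k : Matrix (Fin 2) (Fin 2) K).mulVec w ∈ W' := by
      intro k hk w hw
      obtain ⟨u, hu, rfl⟩ := hw
      have hcoe : (e : (Fin 2 → K) →ₗ[K] (Fin 2 → K)) u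
          = (ρ g : Matrix (Fin 2) (Fin 2) K).mulVec u := rfl
      rw [hcoe]
      have hconj : g⁻¹ * k * g ∈ H := by
        have := Subgroup.Normal.conj_mem ‹H.Normal› k hk g⁻¹
        rwa [inv_inv] at this
      have key : (ρ k : Matrix (Fin 2) (Fin 2) K).mulVec
            ((ρ g : Matrix (Fin 2) (Fin 2) K).mulVec u)
          = (ρ g : Matrix (Fin 2) (Fin 2) K).mulVec
            ((ρ (g⁻¹ * k * g) : Matrix (Fin 2) (Fin 2) K).mulVec u) := by
        rw [Matrix.mulVec_mulVec, Matrix.mulVec_mulVec, ← Units.val_mul, ← Units.val_mul,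
          ← map_mul, ← map_mul]
        group
      rw [key]
      exact ⟨(ρ (g⁻¹ * k * g) : Matrix (Fin 2) (Fin 2) K).mulVec u,
        hW (g⁻¹ * k * g) hconj u hu, rfl⟩
    have hW'ker : W' = LinearMap.ker f := claim W' hinv' hb' ht'
    have hmem : (ρ g : Matrix (Fin 2) (Fin 2) K).mulVec v ∈ W' :=
      ⟨v, hv, rfl⟩
    rw [hW'ker, ← hWker] at hmem
    exact hmem
  rcases hirr W hGinv with h0 | h0
  · exact hbot h0
  · exact htop h0
end

section
/- Fix a prime ℓ and n ≥ 1, and let K be the algebraic closure of ℚ_ℓ with its canonical (spectral) norm topology, so that the ring of integers ℤ_ℓ ⊆ ℚ_ℓ ⊆ K. Let G be a profinite group (a compact, totally disconnected topological group) and let ρ : G → GLₙ(K) be a continuous group homomorphism. Suppose there exists an open subgroup H of G such that: (i) for every h ∈ H, every matrix entry of ρ(h) lies in ℤ_ℓ (viewed inside K); and (ii) there exists m ≥ 0 such that every matrix A ∈ GLₙ(K) all of whose entries lie in ℤ_ℓ and which satisfies A ≡ 1 (mod ℓᵐ) (i.e. every entry of A − 1 lies in ℓᵐ·ℤ_ℓ)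 belongs to ρ(H). Suppose also that there is a dense subset S of G such that tr(ρ(s)) ∈ ℚ_ℓ for all s ∈ S. Then for every g ∈ G, every matrix entry of ρ(g) lies in ℚ_ℓ; that is, ρ(G) ⊆ GLₙ(ℚ_ℓ). -/
/-- **Lemma 3.2 (`ratlrep`).**
Let `K` be the algebraic closure of `ℚ_ℓ`, equipped with the spectral norm (the
unique norm extending the `ℓ`-adic absolute value).  Let `G` be a profinite group
and `ρ : G → GLₙ(K)` a continuous homomorphism.  Suppose there is an open subgroup
`H` of `G` such that `ρ(H)` has all matrix entries in `ℤ_ℓ` and contains all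
matrices with entries in `ℤ_ℓ` congruent to `1` modulo `ℓᵐ` for some `m`.  If
there is a dense subset `S ⊆ G` with `tr(ρ(s)) ∈ ℚ_ℓ` for all `s ∈ S`, then all
matrix entries of `ρ(g)` lie in `ℚ_ℓ` for every `g ∈ G`, i.e. `ρ(G) ⊆ GLₙ(ℚ_ℓ)`. -/
theorem rational_entries_of_dense_rational_traces
    (ℓ : ℕ) [Fact ℓ.Prime] (n : ℕ) (hn : 1 ≤ n)
    {K : Type*} [NormedField K] [Algebra ℚ_[ℓ] K] [IsAlgClosure ℚ_[ℓ] K]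
    (hnorm : ∀ q : ℚ_[ℓ], ‖algebraMap ℚ_[ℓ] K q‖ = ‖q‖)
    {G : Type*} [Group G] [TopologicalSpace G] [IsTopologicalGroup G]
    [CompactSpace G] [T2Space G] [TotallyDisconnectedSpace G]
    (ρ : G →* Matrix.GeneralLinearGroup (Fin n) K)
    (hρ : Continuous ρ)
    (H : Subgroup G) (hHopen : IsOpen (H : Set G))
    (hint : ∀ h ∈ H, ∀ i j : Fin n, ∃ z : ℤ_[ℓ],
      (ρ h : Matrix (Fin n) (Fin n) K) i j = algebraMap ℚ_[ℓ] K (z : ℚ_[ℓ]))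
    (hfull : ∃ m : ℕ, ∀ A : Matrix.GeneralLinearGroup (Fin n) K,
      (∀ i j : Fin n, ∃ z : ℤ_[ℓ],
        (A : Matrix (Fin n) (Fin n) K) i j = algebraMap ℚ_[ℓ] K (z : ℚ_[ℓ])) →
      (∀ i j : Fin n, ∃ z : ℤ_[ℓ],
        ((A : Matrix (Fin n) (Fin n) K) - 1) i j
          = algebraMap ℚ_[ℓ] K ((ℓ : ℚ_[ℓ]) ^ m * (z : ℚ_[ℓ]))) →
      ∃ h ∈ H, ρ h = A)
    (S : Set G) (hS : Dense S)
    (htr : ∀ s ∈ S, ∃ q : ℚ_[ℓ],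
      Matrix.trace (ρ s : Matrix (Fin n) (Fin n) K) = algebraMap ℚ_[ℓ] K q) :
    ∀ g : G, ∀ i j : Fin n, ∃ q : ℚ_[ℓ],
      (ρ g : Matrix (Fin n) (Fin n) K) i j = algebraMap ℚ_[ℓ] K q := by
  classical
  have hinj : Function.Injective (algebraMap ℚ_[ℓ] K) := (algebraMap ℚ_[ℓ] K).injective
  -- the image of ℚ_ℓ in K is closed
  have iso : Isometry (algebraMap ℚ_[ℓ] K) :=
    AddMonoidHomClass.isometry_of_norm _ hnorm
  have hclosed : IsClosed (Set.range (algebraMap ℚ_[ℓ] K)) :=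
    iso.isClosedEmbedding.isClosed_range
  -- trace ∘ ρ is continuous
  have hcont : Continuous fun g : G => Matrix.trace (ρ g : Matrix (Fin n) (Fin n) K) :=
    (Units.continuous_val.comp hρ).matrix_trace
  -- hence all traces are rational
  have htrall : ∀ x : G, ∃ q : ℚ_[ℓ],
      Matrix.trace (ρ x : Matrix (Fin n) (Fin n) K) = algebraMap ℚ_[ℓ] K q := by
    intro x
    have hcl : IsClosed {x : G | Matrix.trace (ρ x : Matrix (Fin n) (Fin n) K)
        ∈ Set.range (algebraMap ℚ_[ℓ] K)} := hclosed.preimage hcont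
    have hsub : S ⊆ {x : G | Matrix.trace (ρ x : Matrix (Fin n) (Fin n) K)
        ∈ Set.range (algebraMap ℚ_[ℓ] K)} := by
      intro s hs
      obtain ⟨q, hq⟩ := htr s hs
      exact ⟨q, hq.symm⟩
    have hx : x ∈ closure S := by rw [hS.closure_eq]; trivial
    obtain ⟨q, hq⟩ := closure_minimal hsub hcl hx
    exact ⟨q, hq.symm⟩
  obtain ⟨m, hfull⟩ := hfull
  intro g i j
  set c : K := algebraMap ℚ_[ℓ] K ((ℓ : ℚ_[ℓ]) ^ m) with hc
  have hlne : ((ℓ : ℚ_[ℓ]) ^ m) ≠ 0 :=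
    pow_ne_zero m (by exact_mod_cast (Fact.out : ℓ.Prime).ne_zero)
  have hcne : c ≠ 0 := by
    rw [hc]
    intro h
    exact hlne (hinj (h.trans (map_zero _).symm))
  set E : Matrix (Fin n) (Fin n) K := Matrix.single j i 1 with hE
  set M : Matrix (Fin n) (Fin n) K := 1 + c • E with hM
  have key : ∀ d d' : K, (1 + d • E) * (1 + d' • E)
      = 1 + (d + d') • E + (d * d') • (E * E) := by
    intro d d'
    simp only [mul_add, add_mul, one_mul, mul_one, Matrix.smul_mul, Matrix.mul_smul, smul_smul,
      add_smul, mul_comm d' d]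
    abel
  -- M is invertible
  have hunit : ∃ A : (Matrix (Fin n) (Fin n) K)ˣ, (A : Matrix (Fin n) (Fin n) K) = M := by
    by_cases hij : i = j
    · subst hij
      have hEE : E * E = E := by
        rw [hE, Matrix.single_mul_single_same, one_mul]
      have h1 : (1 : ℚ_[ℓ]) + (ℓ : ℚ_[ℓ]) ^ m ≠ 0 := by
        have h2 : ((1 + ℓ ^ m : ℕ) : ℚ_[ℓ]) ≠ 0 := Nat.cast_ne_zero.mpr (by positivity)
        push_cast at h2
        exact h2
      have h1c : (1 : K) + c ≠ 0 := by
        rw [hc, ← map_one (algebraMap ℚ_[ℓ] K), ← map_add]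
        intro h
        exact h1 (hinj (h.trans (map_zero _).symm))
      set d : K := (1 + c)⁻¹ - 1 with hd
      have hscal : c + d + c * d = 0 := by
        rw [hd]
        field_simp
        ring
      have hscal' : d + c + d * c = 0 := by linear_combination hscal
      refine ⟨⟨M, 1 + d • E, ?_, ?_⟩, rfl⟩
      · rw [hM, key, hEE, add_assoc, ← add_smul, hscal, zero_smul, add_zero]
      · rw [hM, key, hEE, add_assoc, ← add_smul, hscal', zero_smul, add_zero]
    · have hEE : E * E = 0 := by
        rw [hE]
        exact Matrix.single_mul_single_of_ne (1 : K) j i j hij 1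
      refine ⟨⟨M, 1 + (-c) • E, ?_, ?_⟩, rfl⟩
      · rw [hM, key, hEE, smul_zero, add_zero, add_neg_cancel, zero_smul, add_zero]
      · rw [hM, key, hEE, smul_zero, add_zero, neg_add_cancel, zero_smul, add_zero]
  obtain ⟨A, hA⟩ := hunit
  -- entry conditions for A
  have cond1 : ∀ k l : Fin n, ∃ z : ℤ_[ℓ],
      (A : Matrix (Fin n) (Fin n) K) k l = algebraMap ℚ_[ℓ] K (z : ℚ_[ℓ]) := by
    intro k l
    refine ⟨(if k = l then 1 else 0) + (ℓ : ℤ_[ℓ]) ^ m * (if j = k ∧ i = l then 1 else 0), ?_⟩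
    rw [hA, hM, hE]
    simp only [Matrix.add_apply, Matrix.smul_apply, Matrix.one_apply, Matrix.single,
      Matrix.of_apply, smul_eq_mul, hc]
    split_ifs <;> push_cast <;> simp [map_add, map_mul, map_pow, map_one, map_zero]
  have cond2 : ∀ k l : Fin n, ∃ z : ℤ_[ℓ],
      ((A : Matrix (Fin n) (Fin n) K) - 1) k l
        = algebraMap ℚ_[ℓ] K ((ℓ : ℚ_[ℓ]) ^ m * (z : ℚ_[ℓ])) := by
    intro k l
    refine ⟨if j = k ∧ i = l then 1 else 0, ?_⟩
    rw [hA, hM, hE]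
    simp only [add_sub_cancel_left, Matrix.smul_apply, Matrix.single, Matrix.of_apply,
      smul_eq_mul, hc]
    split_ifs <;> push_cast <;> simp [map_mul, map_pow, map_one, map_zero]
  obtain ⟨h, hH, hρh⟩ := hfull A cond1 cond2
  obtain ⟨q1, hq1⟩ := htrall (g * h)
  obtain ⟨q0, hq0⟩ := htrall g
  have htr2 : Matrix.trace ((ρ g : Matrix (Fin n) (Fin n) K) * M)
      = algebraMap ℚ_[ℓ] K q1 := by
    rw [← hq1, map_mul]
    congr 1
    rw [Units.val_mul, hρh, hA]
  have htrE : Matrix.trace ((ρ g : Matrix (Fin n) (Fin n) K) * E)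
      = (ρ g : Matrix (Fin n) (Fin n) K) i j := by
    rw [hE]
    simp [Matrix.trace, Matrix.diag, Matrix.mul_apply, Matrix.single, Matrix.of_apply,
      mul_ite, mul_one, mul_zero, ite_and, Finset.sum_ite_eq, Finset.sum_ite_eq']
  have expand : Matrix.trace ((ρ g : Matrix (Fin n) (Fin n) K) * M)
      = Matrix.trace (ρ g : Matrix (Fin n) (Fin n) K)
        + c * (ρ g : Matrix (Fin n) (Fin n) K) i j := by
    rw [hM, mul_add, mul_one, Matrix.trace_add, Matrix.mul_smul, Matrix.trace_smul, htrE,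
      smul_eq_mul]
  have hX : c * (ρ g : Matrix (Fin n) (Fin n) K) i j = algebraMap ℚ_[ℓ] K (q1 - q0) := by
    rw [map_sub]
    linear_combination htr2 - expand - hq0
  refine ⟨((ℓ : ℚ_[ℓ]) ^ m)⁻¹ * (q1 - q0), ?_⟩
  have : algebraMap ℚ_[ℓ] K (((ℓ : ℚ_[ℓ]) ^ m)⁻¹ * (q1 - q0))
      = c⁻¹ * (c * (ρ g : Matrix (Fin n) (Fin n) K) i j) := by
    rw [map_mul, map_inv₀, ← hX, hc]
  rw [this, inv_mul_cancel_left₀ hcne]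
end
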